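/- Let 0 < ε < 1 and let m be a positive integer such that at least (3 − ε)·m of the residue classes a (mod 4m) with 0 < a < 4m are totient-free. Then for all positive reals H and x, the number of values of Euler's totient function lying in the interval (x, x + H] is at most (1 + ε)·H/4 + 2m. -/

import Mathlib

/-- A residue class `a (mod q)` is totient-free if no positive integer `n` satisfies
`φ(n) ≡ a (mod q)`. -/
def TotientFree (a q : ℕ) : Prop :=
  ∀ n : ℕ, 0 < n → ¬ (Nat.totient n ≡ a [MOD q])

/-- The set of values of Euler's totient function on the positive integers. -/
def totientValues : Set ℕ := {v : ℕ | ∃ n : ℕ, 0 < n ∧ Nat.totient n = v}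

open Finset in
/-- In `(a, b]` there are at most `(b - a - 1)/q + 1` integers in a fixed residue class mod q. -/
lemma fiber_card_le (q a b r : ℕ) (hq : 0 < q) :
    ((Finset.Ioc a b).filter (fun v => v % q = r)).card ≤ (b - a - 1) / q + 1 := by
  classical
  have : ((Finset.Ioc a b).filter (fun v => v % q = r)).card ≤
      (Finset.range ((b - a - 1) / q + 1)).card := by
    apply Finset.card_le_card_of_injOn (fun v => (v - (a + 1)) / q)
    · intro v hv
      simp only [Finset.mem_coe, Finset.mem_filter, Finset.mem_Ioc] at hv
      simp only [Finset.mem_coe, Finset.mem_range, Nat.lt_succ_iff]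
      exact Nat.div_le_div_right (by omega)
    · intro v1 hv1 v2 hv2 hdiv
      simp only [Finset.coe_filter, Set.mem_setOf_eq, Finset.mem_Ioc] at hv1 hv2
      have h1 := Nat.div_add_mod (v1 - (a + 1)) q
      have h2 := Nat.div_add_mod (v2 - (a + 1)) q
      have m1 := Nat.mod_lt (v1 - (a + 1)) hq
      have m2 := Nat.mod_lt (v2 - (a + 1)) hq
      have hdiv' : (v1 - (a + 1)) / q = (v2 - (a + 1)) / q := hdiv
      rw [hdiv'] at h1
      have hmod : v1 % q = v2 % q := by rw [hv1.2, hv2.2]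
      rcases le_total v1 v2 with h | h
      · have hd : q ∣ v2 - v1 := (Nat.modEq_iff_dvd' h).mp hmod
        have := Nat.eq_zero_of_dvd_of_lt hd (show v2 - v1 < q by omega)
        omega
      · have hd : q ∣ v1 - v2 := (Nat.modEq_iff_dvd' h).mp hmod.symm
        have := Nat.eq_zero_of_dvd_of_lt hd (show v1 - v2 < q by omega)
        omega
  simpa using this

/-- If `0 < ε < 1` and `m` is a positive integer such that at least `(3 - ε) * m` of the
residue classes `a (mod 4m)` with `0 < a < 4m` are totient-free, then for all positive
reals `H` and `x`, the number of totient values in `(x, x + H]` is at most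
`(1 + ε) * H / 4 + 2 * m`. -/
theorem totient_values_in_interval_le (ε : ℝ) (hε0 : 0 < ε) (hε1 : ε < 1)
    (m : ℕ) (hm : 0 < m)
    (hfree : (3 - ε) * m ≤
      (({a : ℕ | 0 < a ∧ a < 4 * m ∧ TotientFree a (4 * m)}.ncard : ℝ)))
    (H x : ℝ) (hH : 0 < H) (hx : 0 < x) :
    (({v : ℕ | v ∈ totientValues ∧ x < (v : ℝ) ∧ (v : ℝ) ≤ x + H}.ncard : ℝ)) ≤
      (1 + ε) * H / 4 + 2 * m := by
  classical
  set q : ℕ := 4 * m with hq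
  have hq0 : 0 < q := by positivity
  set a : ℕ := ⌊x⌋₊ with ha
  set b : ℕ := ⌊x + H⌋₊ with hb
  -- the finset of totient values in the interval
  set T : Finset ℕ := (Finset.Ioc a b).filter (fun v => v ∈ totientValues) with hT
  -- identify the set with T
  have hset : {v : ℕ | v ∈ totientValues ∧ x < (v : ℝ) ∧ (v : ℝ) ≤ x + H} = (T : Set ℕ) := by
    ext v
    simp only [Set.mem_setOf_eq, hT, Finset.coe_filter, Finset.mem_Ioc]
    constructor
    · rintro ⟨h1, h2, h3⟩
      exact ⟨⟨(Nat.floor_lt hx.le).mpr h2, Nat.le_floor h3⟩, h1⟩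
    · rintro ⟨⟨h2, h3⟩, h1⟩
      exact ⟨h1, (Nat.floor_lt hx.le).mp h2, (Nat.le_floor_iff (by positivity)).mp h3⟩
  rw [hset, Set.ncard_coe_finset]
  -- the finset of totient-free classes
  set G : Finset ℕ := (Finset.Ioo 0 q).filter (fun r => TotientFree r q) with hG
  have hGset : {a : ℕ | 0 < a ∧ a < 4 * m ∧ TotientFree a (4 * m)} = (G : Set ℕ) := by
    ext r
    simp only [Set.mem_setOf_eq, hG, Finset.coe_filter, Finset.mem_Ioo]
    tauto
  rw [hGset, Set.ncard_coe_finset] at hfree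
  -- the image of T mod q
  set A : Finset ℕ := T.image (fun v => v % q) with hA
  -- A is disjoint from G and both are in range q
  have hAG : Disjoint A G := by
    rw [Finset.disjoint_left]
    intro r hrA hrG
    simp only [hA, Finset.mem_image] at hrA
    obtain ⟨v, hvT, hvr⟩ := hrA
    simp only [hT, Finset.mem_filter] at hvT
    obtain ⟨n, hn, hφ⟩ := hvT.2
    simp only [hG, Finset.mem_filter, Finset.mem_Ioo] at hrG
    exact hrG.2 n hn (by
      show Nat.totient n % q = r % q
      rw [hφ, Nat.mod_eq_of_lt hrG.1.2]
      exact hvr)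
  have hAsub : A ⊆ Finset.range q := by
    intro r hr
    simp only [hA, Finset.mem_image] at hr
    obtain ⟨v, _, hvr⟩ := hr
    simp [Finset.mem_range, ← hvr, Nat.mod_lt v hq0]
  have hGsub : G ⊆ Finset.range q := by
    intro r hr
    simp only [hG, Finset.mem_filter, Finset.mem_Ioo] at hr
    simp [Finset.mem_range, hr.1.2]
  have hcardAG : A.card + G.card ≤ q := by
    rw [← Finset.card_union_of_disjoint hAG]
    calc (A ∪ G).card ≤ (Finset.range q).card :=
          Finset.card_le_card (Finset.union_subset hAsub hGsub)
      _ = q := Finset.card_range q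
  -- bound on A.card in ℝ
  have hAcard : (A.card : ℝ) ≤ (1 + ε) * m := by
    have h1 : (A.card : ℝ) + G.card ≤ q := by exact_mod_cast hcardAG
    have h2 : (q : ℝ) = 4 * m := by exact_mod_cast rfl
    linarith
  -- fiber bound
  set F : ℕ := (b - a - 1) / q + 1 with hF
  have hcount : T.card ≤ F * A.card := by
    apply Finset.card_le_mul_card_image
    intro r _
    calc (T.filter (fun v => v % q = r)).card
        ≤ ((Finset.Ioc a b).filter (fun v => v % q = r)).card := by
          apply Finset.card_le_card
          intro v hv
          simp only [hT, Finset.mem_filter, Finset.filter_filter] at hv ⊢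
          tauto
      _ ≤ F := fiber_card_le q a b r hq0
  -- bound F in ℝ
  have hFb : (F : ℝ) ≤ H / q + 1 := by
    have h1 : (q : ℝ) * ((b - a - 1) / q : ℕ) ≤ ((b - a - 1 : ℕ) : ℝ) := by
      exact_mod_cast Nat.mul_div_le (b - a - 1) q
    have h2 : ((b - a - 1 : ℕ) : ℝ) < H := by
      have hbx : (b : ℝ) ≤ x + H := Nat.floor_le (by positivity)
      have hax : x < (a : ℝ) + 1 := Nat.lt_floor_add_one x
      rcases le_or_gt b (a + 1) with h | h
      · have : b - a - 1 = 0 := by omega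
        rw [this]; simpa using hH
      · have hba : ((b - a - 1 : ℕ) : ℝ) = (b : ℝ) - a - 1 := by
          have e : b - a - 1 = b - (a + 1) := by omega
          rw [e, Nat.cast_sub (by omega : a + 1 ≤ b)]
          push_cast; ring
        rw [hba]; linarith
    have hq0' : (0 : ℝ) < q := by exact_mod_cast hq0
    have : ((b - a - 1) / q : ℕ) ≤ H / q := by
      rw [le_div_iff₀ hq0']
      nlinarith [h1, h2]
    simp only [hF]
    push_cast
    linarith
  -- assemble
  have hmain : (T.card : ℝ) ≤ (H / q + 1) * ((1 + ε) * m) := by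
    calc (T.card : ℝ) ≤ (F : ℝ) * A.card := by exact_mod_cast hcount
      _ ≤ (H / q + 1) * ((1 + ε) * m) := by
          apply mul_le_mul hFb hAcard (by positivity) (by positivity)
  have h2 : (q : ℝ) = 4 * m := by exact_mod_cast rfl
  have hm' : (0 : ℝ) < m := by exact_mod_cast hm
  have : (H / q + 1) * ((1 + ε) * m) = (1 + ε) * H / 4 + (1 + ε) * m := by
    rw [h2]
    field_simp
  rw [this] at hmain
  nlinarith [hmain]
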